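/- arXiv:1603.06056 — 4 statements merged into one kernel-verified Lean document; each statement's English description precedes it below -/
import Mathlib

section
/- Let D be a triangulated category and let (U, V) and (V, W) be stable t-structures in D. Then for the canonical embedding i_* : V → D there is a recollement of D relative to V and D/V such that the essential image of the left adjoint functor j_! : D/V → D equals U and the essential image of the right adjoint functor j_* : D/V → D equals W. -/
open CategoryTheory Limits Pretriangulated

universe v₁ v₂ v₃ u₁ u₂ u₃

namespace PaperIKM

/-- A recollement of `D` relative to `A` (via the inclusion-type functor `i`) and `B`
(via the quotient-type functor `q`) : the remaining four functors, the four adjunctions,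
full faithfulness of `i`, `j_! = jShriek` and `j_* = jStar`, and the kernel/image
identifications. -/
structure IsRecollement {A : Type u₁} {D : Type u₂} {B : Type u₃}
    [Category.{v₁} A] [Category.{v₂} D] [Category.{v₃} B]
    (i : A ⥤ D) (q : D ⥤ B) where
  iStar : D ⥤ A
  iShriek : D ⥤ A
  jShriek : B ⥤ D
  jStar : B ⥤ D
  adj₁ : iStar ⊣ i
  adj₂ : i ⊣ iShriek
  adj₃ : jShriek ⊣ q
  adj₄ : q ⊣ jStar
  i_full : i.Full
  i_faithful : i.Faithful
  jShriek_full : jShriek.Full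
  jShriek_faithful : jShriek.Faithful
  jStar_full : jStar.Full
  jStar_faithful : jStar.Faithful
  im_jShriek_eq_ker_iStar : ∀ X : D, (∃ Y, Nonempty (jShriek.obj Y ≅ X)) ↔ IsZero (iStar.obj X)
  im_i_eq_ker_q : ∀ X : D, (∃ Y, Nonempty (i.obj Y ≅ X)) ↔ IsZero (q.obj X)
  im_jStar_eq_ker_iShriek : ∀ X : D, (∃ Y, Nonempty (jStar.obj Y ≅ X)) ↔ IsZero (iShriek.obj X)

variable (C : Type u₁) [Category.{v₁} C] [HasZeroObject C] [HasShift C ℤ] [Preadditive C]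
  [∀ n : ℤ, (shiftFunctor C n).Additive] [Pretriangulated C]

/-- A stable t-structure in a pretriangulated category. -/
structure IsStableTStructure (U V : Set C) : Prop where
  shift_memU : ∀ (n : ℤ) (X : C), X ∈ U → (shiftFunctor C n).obj X ∈ U
  shift_memV : ∀ (n : ℤ) (X : C), X ∈ V → (shiftFunctor C n).obj X ∈ V
  hom_zero : ∀ ⦃X Y : C⦄, X ∈ U → Y ∈ V → ∀ f : X ⟶ Y, f = 0
  exists_triangle : ∀ X : C, ∃ (A B : C) (_ : A ∈ U) (_ : B ∈ V)
    (f : A ⟶ X) (g : X ⟶ B) (h : B ⟶ A⟦(1 : ℤ)⟧),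
      Triangle.mk f g h ∈ distTriang C

/-- A full triangulated subcategory, given as a set of objects. -/
structure IsTriangulatedSub (U : Set C) : Prop where
  zero_mem : ∀ X : C, IsZero X → X ∈ U
  iso_mem : ∀ ⦃X Y : C⦄, (X ≅ Y) → X ∈ U → Y ∈ U
  shift_mem : ∀ (n : ℤ) (X : C), X ∈ U → (shiftFunctor C n).obj X ∈ U
  ext_mem : ∀ T : Triangle C, (T ∈ distTriang C) → T.obj₁ ∈ U → T.obj₃ ∈ U → T.obj₂ ∈ U

variable {C}

/-- The class of morphisms whose cone belongs to `W`; localizing at this class produces the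
Verdier quotient by `W`. -/
def coneIn (W : Set C) : MorphismProperty C := fun X Y f =>
  ∃ (Z : C) (g : Y ⟶ Z) (h : Z ⟶ X⟦(1 : ℤ)⟧),
    (Triangle.mk f g h ∈ distTriang C) ∧ Z ∈ W

/-! ### Auxiliary lemmas -/

section HomBijections

lemma postcomp_bij (T : Triangle C) (hT : T ∈ distTriang C) (Q : C)
    (h1 : ∀ f : T.obj₁ ⟶ Q, f = 0) (h1' : ∀ f : (T.obj₁)⟦(1 : ℤ)⟧ ⟶ Q, f = 0) :
    Function.Bijective (fun k : T.obj₃ ⟶ Q => T.mor₂ ≫ k) := by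
  constructor
  · intro k k' hkk
    have hsub : T.mor₂ ≫ (k - k') = 0 := by
      rw [Preadditive.comp_sub]
      rw [show T.mor₂ ≫ k = T.mor₂ ≫ k' from hkk, sub_self]
    obtain ⟨l, hl⟩ := Triangle.yoneda_exact₃ T hT (k - k') hsub
    rw [h1' l, comp_zero] at hl
    exact sub_eq_zero.1 hl
  · intro u
    obtain ⟨k, hk⟩ := Triangle.yoneda_exact₂ T hT u (by rw [h1 (T.mor₁ ≫ u)])
    exact ⟨k, hk.symm⟩

lemma precomp_bij (T : Triangle C) (hT : T ∈ distTriang C) (Q : C)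
    (h3 : ∀ f : Q ⟶ T.obj₃, f = 0) (h3' : ∀ f : Q ⟶ (T.obj₃)⟦(-1 : ℤ)⟧, f = 0) :
    Function.Bijective (fun v : Q ⟶ T.obj₁ => v ≫ T.mor₁) := by
  constructor
  · intro v v' hvv
    have hsub : (v - v') ≫ T.invRotate.mor₂ = 0 := by
      show (v - v') ≫ T.mor₁ = 0
      rw [Preadditive.sub_comp]
      rw [show v ≫ T.mor₁ = v' ≫ T.mor₁ from hvv, sub_self]
    obtain ⟨w, hw⟩ :=
      Triangle.coyoneda_exact₂ T.invRotate (inv_rot_of_distTriang T hT) (v - v') hsub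
    rw [h3' w] at hw
    exact sub_eq_zero.1 (hw.trans zero_comp)
  · intro u
    obtain ⟨v, hv⟩ := Triangle.coyoneda_exact₂ T hT u (by rw [h3 (u ≫ T.mor₂)])
    exact ⟨v, hv.symm⟩

end HomBijections

/-- Preservation of zero objects by equivalences. -/
lemma equiv_isZero_obj {A : Type*} {B : Type*} [Category A] [Category B]
    (e : A ≌ B) (X : A) (hX : IsZero X) : IsZero (e.functor.obj X) := by
  constructor
  · intro Y
    exact (hX.unique_to (e.inverse.obj Y)).map
      (fun u => @Equiv.unique _ _ u (e.toAdjunction.homEquiv X Y))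
  · intro Y
    exact (hX.unique_from (e.inverse.obj Y)).map
      (fun u => @Equiv.unique _ _ u ((e.symm.toAdjunction.homEquiv Y X).symm))

lemma equiv_isZero_iff {A : Type*} {B : Type*} [Category A] [Category B]
    (e : A ≌ B) (X : A) : IsZero X ↔ IsZero (e.functor.obj X) := by
  constructor
  · exact equiv_isZero_obj e X
  · intro hFX
    exact IsZero.of_iso (equiv_isZero_obj e.symm (e.functor.obj X) hFX) (e.unitIso.app X)

/-! ### Decompositions coming from a stable t-structure -/

/-- The data of a decomposition triangle `A ⟶ X ⟶ B ⟶ A⟦1⟧` with `A ∈ S`, `B ∈ T`. -/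
structure Decomp (S T : Set C) (X : C) where
  A : C
  B : C
  hA : A ∈ S
  hB : B ∈ T
  f : A ⟶ X
  g : X ⟶ B
  w : B ⟶ A⟦(1 : ℤ)⟧
  dist : Triangle.mk f g w ∈ distTriang C

/-- Choice of a decomposition triangle for every object. -/
noncomputable def decomp {S T : Set C} (h : IsStableTStructure C S T) (X : C) :
    Decomp S T X :=
  Classical.choice (by
    obtain ⟨A, B, hA, hB, f, g, w, hd⟩ := h.exists_triangle X
    exact ⟨⟨A, B, hA, hB, f, g, w, hd⟩⟩)

section Adjoints

variable {S T : Set C} (h : IsStableTStructure C S T)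

/-- The hom bijection underlying the left adjoint of the inclusion of `T`. -/
noncomputable def laEquiv (X : C) (Y : ObjectProperty.FullSubcategory (· ∈ T)) :
    ((⟨(decomp h X).B, (decomp h X).hB⟩ : ObjectProperty.FullSubcategory (· ∈ T)) ⟶ Y) ≃
      (X ⟶ (ObjectProperty.ι (· ∈ T)).obj Y) :=
  Equiv.ofBijective
    (fun k => (decomp h X).g ≫ (ObjectProperty.ι (· ∈ T)).map k)
    ((postcomp_bij (Triangle.mk (decomp h X).f (decomp h X).g (decomp h X).w)
      (decomp h X).dist Y.obj
      (fun u => h.hom_zero (decomp h X).hA Y.property u)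
      (fun u => h.hom_zero (h.shift_memU 1 _ (decomp h X).hA) Y.property u)).comp (f := (ObjectProperty.ι (· ∈ T)).map)
      ((Functor.FullyFaithful.ofFullyFaithful (ObjectProperty.ι (· ∈ T))).map_bijective _ _))

lemma laEquiv_apply (X : C) (Y : ObjectProperty.FullSubcategory (· ∈ T)) (k) :
    (laEquiv h X Y) k = (decomp h X).g ≫ (ObjectProperty.ι (· ∈ T)).map k :=
  rfl

lemma laEquiv_he :
    ∀ (X : C) (Y Y' : ObjectProperty.FullSubcategory (· ∈ T)) (g : Y ⟶ Y')
      (k : (⟨(decomp h X).B, (decomp h X).hB⟩ : ObjectProperty.FullSubcategory (· ∈ T)) ⟶ Y),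
      laEquiv h X Y' (k ≫ g) =
        laEquiv h X Y k ≫ (ObjectProperty.ι (· ∈ T)).map g := by
  intro X Y Y' g k
  simp only [laEquiv_apply, Functor.map_comp, Category.assoc]

/-- The left adjoint of the inclusion of `T`. -/
noncomputable def la : C ⥤ ObjectProperty.FullSubcategory (· ∈ T) :=
  Adjunction.leftAdjointOfEquiv (fun X Y => laEquiv h X Y) (laEquiv_he h)

/-- The adjunction `la ⊣ ι_T`. -/
noncomputable def laAdj : la h ⊣ ObjectProperty.ι (· ∈ T) :=
  Adjunction.adjunctionOfEquivLeft (fun X Y => laEquiv h X Y) (laEquiv_he h)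

lemma laAdj_unit_app (X : C) : (laAdj h).unit.app X = (decomp h X).g := by
  show (laEquiv h X _) (𝟙 _) = (decomp h X).g
  rw [laEquiv_apply, CategoryTheory.Functor.map_id]
  exact Category.comp_id _

/-- The hom bijection underlying the right adjoint of the inclusion of `S`. -/
noncomputable def raEquiv (X : ObjectProperty.FullSubcategory (· ∈ S)) (Y : C) :
    ((ObjectProperty.ι (· ∈ S)).obj X ⟶ Y) ≃
      (X ⟶ (⟨(decomp h Y).A, (decomp h Y).hA⟩ : ObjectProperty.FullSubcategory (· ∈ S))) :=
  (Equiv.ofBijective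
    (fun v => (ObjectProperty.ι (· ∈ S)).map v ≫ (decomp h Y).f)
    (by
      have hb := (precomp_bij (Triangle.mk (decomp h Y).f (decomp h Y).g (decomp h Y).w)
        (decomp h Y).dist X.obj
        (fun u => h.hom_zero X.property (decomp h Y).hB u)
        (fun u => h.hom_zero X.property (h.shift_memV (-1) _ (decomp h Y).hB) u)).comp
        ((Functor.FullyFaithful.ofFullyFaithful (ObjectProperty.ι (· ∈ S))).map_bijective X ⟨(decomp h Y).A, (decomp h Y).hA⟩)
      exact hb)).symm

lemma raEquiv_symm_apply (X : ObjectProperty.FullSubcategory (· ∈ S)) (Y : C) (v) :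
    (raEquiv h X Y).symm v =
      (ObjectProperty.ι (· ∈ S)).map v ≫ (decomp h Y).f :=
  rfl

lemma raEquiv_spec (X : ObjectProperty.FullSubcategory (· ∈ S)) (Y : C)
    (u : (ObjectProperty.ι (· ∈ S)).obj X ⟶ Y) :
    (ObjectProperty.ι (· ∈ S)).map ((raEquiv h X Y) u) ≫ (decomp h Y).f
      = u := by
  rw [← raEquiv_symm_apply h X Y ((raEquiv h X Y) u), Equiv.symm_apply_apply]

lemma raEquiv_he :
    ∀ (X' X : ObjectProperty.FullSubcategory (· ∈ S)) (Y : C) (f : X' ⟶ X)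
      (g : (ObjectProperty.ι (· ∈ S)).obj X ⟶ Y),
      raEquiv h X' Y ((ObjectProperty.ι (· ∈ S)).map f ≫ g) =
        f ≫ raEquiv h X Y g := by
  intro X' X Y f g
  apply (raEquiv h X' Y).symm.injective
  rw [Equiv.symm_apply_apply, raEquiv_symm_apply, Functor.map_comp, Category.assoc,
    raEquiv_spec]

/-- The right adjoint of the inclusion of `S`. -/
noncomputable def ra : C ⥤ ObjectProperty.FullSubcategory (· ∈ S) :=
  Adjunction.rightAdjointOfEquiv (fun X Y => raEquiv h X Y) (raEquiv_he h)

/-- The adjunction `ι_S ⊣ ra`. -/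
noncomputable def raAdj : ObjectProperty.ι (· ∈ S) ⊣ ra h :=
  Adjunction.adjunctionOfEquivRight (fun X Y => raEquiv h X Y) (raEquiv_he h)

lemma raAdj_counit_app (Y : C) : (raAdj h).counit.app Y = (decomp h Y).f := by
  show (raEquiv h _ Y).symm (𝟙 _) = (decomp h Y).f
  rw [raEquiv_symm_apply, CategoryTheory.Functor.map_id]
  exact Category.id_comp _

end Adjoints

section ZeroLemmas

variable {S T : Set C} (h : IsStableTStructure C S T)

lemma isZero_la_iff (hSsub : IsTriangulatedSub C S) (X : C) :
    IsZero ((la h).obj X) ↔ X ∈ S := by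
  constructor
  · intro h0
    have hB : IsZero ((decomp h X).B) := by
      rw [IsZero.iff_id_eq_zero]
      have e := congrArg (ObjectProperty.ι (· ∈ T)).map ((IsZero.iff_id_eq_zero ((la h).obj X)).1 h0)
      simp at e
      exact e
    haveI : IsIso (decomp h X).f :=
      ((Triangle.mk (decomp h X).f (decomp h X).g (decomp h X).w).isZero₃_iff_isIso₁
        (decomp h X).dist).1 hB
    exact hSsub.iso_mem (asIso (decomp h X).f) (decomp h X).hA
  · intro hX
    rw [IsZero.iff_id_eq_zero]
    have hg0 : (decomp h X).g = 0 := h.hom_zero hX (decomp h X).hB _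
    apply (ObjectProperty.ι (· ∈ T)).map_injective
    rw [CategoryTheory.Functor.map_id, CategoryTheory.Functor.map_zero]
    apply (postcomp_bij (Triangle.mk (decomp h X).f (decomp h X).g (decomp h X).w)
      (decomp h X).dist (decomp h X).B
      (fun u => h.hom_zero (decomp h X).hA (decomp h X).hB u)
      (fun u => h.hom_zero (h.shift_memU 1 _ (decomp h X).hA) (decomp h X).hB u)).1
    show (decomp h X).g ≫ 𝟙 ((decomp h X).B) = (decomp h X).g ≫ 0
    rw [Category.comp_id, Limits.comp_zero, hg0]

lemma isZero_ra_iff (hTsub : IsTriangulatedSub C T) (Y : C) :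
    IsZero ((ra h).obj Y) ↔ Y ∈ T := by
  constructor
  · intro h0
    have hA : IsZero ((decomp h Y).A) := by
      rw [IsZero.iff_id_eq_zero]
      have e := congrArg (ObjectProperty.ι (· ∈ S)).map ((IsZero.iff_id_eq_zero ((ra h).obj Y)).1 h0)
      simp at e
      exact e
    haveI : IsIso (decomp h Y).g :=
      ((Triangle.mk (decomp h Y).f (decomp h Y).g (decomp h Y).w).isZero₁_iff_isIso₂
        (decomp h Y).dist).1 hA
    exact hTsub.iso_mem (asIso (decomp h Y).g).symm (decomp h Y).hB
  · intro hY
    rw [IsZero.iff_id_eq_zero]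
    have hf0 : (decomp h Y).f = 0 := h.hom_zero (decomp h Y).hA hY _
    apply (ObjectProperty.ι (· ∈ S)).map_injective
    rw [CategoryTheory.Functor.map_id, CategoryTheory.Functor.map_zero]
    apply (precomp_bij (Triangle.mk (decomp h Y).f (decomp h Y).g (decomp h Y).w)
      (decomp h Y).dist (decomp h Y).A
      (fun u => h.hom_zero (decomp h Y).hA (decomp h Y).hB u)
      (fun u => h.hom_zero (decomp h Y).hA (h.shift_memV (-1) _ (decomp h Y).hB) u)).1
    show 𝟙 ((decomp h Y).A) ≫ (decomp h Y).f = 0 ≫ (decomp h Y).f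
    rw [Category.id_comp, Limits.zero_comp, hf0]

lemma laAdj_unit_cone (X : C) : coneIn S ((laAdj h).unit.app X) := by
  rw [laAdj_unit_app]
  exact ⟨_, _, _, rot_of_distTriang _ (decomp h X).dist,
    h.shift_memU 1 _ (decomp h X).hA⟩

lemma raAdj_counit_cone (X : C) : coneIn T ((raAdj h).counit.app X) := by
  rw [raAdj_counit_app]
  exact ⟨_, _, _, (decomp h X).dist, (decomp h X).hB⟩

end ZeroLemmas

section Inverts

variable {S T : Set C} (h : IsStableTStructure C S T)

lemma ra_inverts : (coneIn T).IsInvertedBy (ra h) := by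
  intro X Y f hf
  obtain ⟨Z, g, w, hd, hZ⟩ := hf
  rw [isIso_iff_yoneda_map_bijective]
  intro Q
  have bij1 : Function.Bijective
      (fun u : (ObjectProperty.ι (· ∈ S)).obj Q ⟶ X => u ≫ f) :=
    precomp_bij (Triangle.mk f g w) hd Q.obj
      (fun u => h.hom_zero Q.property hZ u)
      (fun u => h.hom_zero Q.property (h.shift_memV (-1) _ hZ) u)
  have key : ∀ v : Q ⟶ (ra h).obj X,
      (raEquiv h Q Y).symm (v ≫ (ra h).map f)
        = (raEquiv h Q X).symm v ≫ f := by
    intro v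
    erw [raEquiv_symm_apply, raEquiv_symm_apply, Functor.map_comp, Category.assoc,
      Category.assoc]
    congr 1
    have hnat := (raAdj h).counit.naturality f
    rw [raAdj_counit_app h Y, raAdj_counit_app h X] at hnat
    exact hnat
  have heq : (fun v : Q ⟶ (ra h).obj X => v ≫ (ra h).map f)
      = (raEquiv h Q Y) ∘ (fun u => u ≫ f) ∘
          (fun v : Q ⟶ (ra h).obj X => (raEquiv h Q X).symm v) := by
    funext v
    apply (raEquiv h Q Y).symm.injective
    show (raEquiv h Q Y).symm (v ≫ (ra h).map f)
      = (raEquiv h Q Y).symm ((raEquiv h Q Y) ((raEquiv h Q X).symm v ≫ f))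
    rw [Equiv.symm_apply_apply]
    exact key v
  rw [heq]
  exact (raEquiv h Q Y).bijective.comp (bij1.comp (raEquiv h Q X).symm.bijective)

lemma la_inverts : (coneIn S).IsInvertedBy (la h) := by
  intro X Y f hf
  obtain ⟨Z, g, w, hd, hZ⟩ := hf
  rw [isIso_iff_coyoneda_map_bijective]
  intro Q
  have bij1 : Function.Bijective
      (fun u : Y ⟶ (ObjectProperty.ι (· ∈ T)).obj Q => f ≫ u) :=
    postcomp_bij (Triangle.mk f g w).invRotate (inv_rot_of_distTriang _ hd) Q.obj
      (fun u => h.hom_zero (h.shift_memU (-1) _ hZ) Q.property u)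
      (fun u => h.hom_zero (h.shift_memU 1 _ (h.shift_memU (-1) _ hZ)) Q.property u)
  have key : ∀ k : (la h).obj Y ⟶ Q,
      laEquiv h X Q ((la h).map f ≫ k) = f ≫ laEquiv h Y Q k := by
    intro k
    erw [laEquiv_apply, laEquiv_apply, Functor.map_comp, ← Category.assoc,
      ← Category.assoc]
    congr 1
    have hnat := (laAdj h).unit.naturality f
    rw [laAdj_unit_app h X, laAdj_unit_app h Y] at hnat
    exact hnat.symm
  have heq : (fun k : (la h).obj Y ⟶ Q => (la h).map f ≫ k)
      = (laEquiv h X Q).symm ∘ (fun u => f ≫ u) ∘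
          (fun k : (la h).obj Y ⟶ Q => laEquiv h Y Q k) := by
    funext k
    apply (laEquiv h X Q).injective
    show laEquiv h X Q ((la h).map f ≫ k)
      = laEquiv h X Q ((laEquiv h X Q).symm (f ≫ laEquiv h Y Q k))
    rw [Equiv.apply_symm_apply]
    exact key k
  rw [heq]
  exact (laEquiv h X Q).symm.bijective.comp (bij1.comp (laEquiv h Y Q).bijective)

end Inverts

section Loc

variable {S T : Set C} (h : IsStableTStructure C S T)
variable {E₀ : Type u₂} [Category.{v₂} E₀] (q : C ⥤ E₀)

section RaLoc

variable [q.IsLocalization (coneIn T)]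

/-- `ra ⋙ (ι ⋙ q) ≅ q`. -/
noncomputable def raCompIso :
    ra h ⋙ (ObjectProperty.ι (· ∈ S) ⋙ q) ≅ q :=
  NatIso.ofComponents
    (fun X =>
      have : IsIso (q.map ((raAdj h).counit.app X)) :=
        Localization.inverts q (coneIn T) _ (raAdj_counit_cone h X)
      asIso (q.map ((raAdj h).counit.app X)))
    (fun {X Y} f => by
      have h1 := (raAdj h).counit.naturality f
      have h2 : q.map ((ra h ⋙ ObjectProperty.ι (· ∈ S)).map f) ≫
            q.map ((raAdj h).counit.app Y)
          = q.map ((raAdj h).counit.app X) ≫ q.map f := by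
        rw [← q.map_comp, ← q.map_comp, h1]; rfl
      exact h2)

/-- The inclusion of `S` composed with the localization functor is an equivalence. -/
noncomputable def raLocEquiv : ObjectProperty.FullSubcategory (· ∈ S) ≌ E₀ :=
  CategoryTheory.Equivalence.mk (ObjectProperty.ι (· ∈ S) ⋙ q)
    (Localization.lift (ra h) (ra_inverts h) q)
    ((asIso (raAdj h).unit) ≪≫
      (Functor.isoWhiskerLeft (ObjectProperty.ι (· ∈ S))
        (Localization.fac (ra h) (ra_inverts h) q)).symm ≪≫
      (Functor.associator _ _ _).symm)
    (Localization.liftNatIso q (coneIn T)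
      (ra h ⋙ (ObjectProperty.ι (· ∈ S) ⋙ q)) q
      (Localization.lift (ra h) (ra_inverts h) q ⋙
        (ObjectProperty.ι (· ∈ S) ⋙ q))
      (𝟭 E₀) (raCompIso h q))

/-- The `j_! ⊣ q` adjunction. -/
noncomputable def raLocAdj :
    ((raLocEquiv h q).inverse ⋙ ObjectProperty.ι (· ∈ S)) ⊣ q :=
  Adjunction.ofNatIsoRight ((raLocEquiv h q).symm.toAdjunction.comp (raAdj h))
    (raCompIso h q)

end RaLoc

section LaLoc

variable [q.IsLocalization (coneIn S)]

/-- `la ⋙ (ι ⋙ q) ≅ q`. -/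
noncomputable def laCompIso :
    la h ⋙ (ObjectProperty.ι (· ∈ T) ⋙ q) ≅ q :=
  (NatIso.ofComponents
    (fun X =>
      have : IsIso (q.map ((laAdj h).unit.app X)) :=
        Localization.inverts q (coneIn S) _ (laAdj_unit_cone h X)
      asIso (q.map ((laAdj h).unit.app X)))
    (fun {X Y} f => by
      have h1 := (laAdj h).unit.naturality f
      have h2 : q.map f ≫ q.map ((laAdj h).unit.app Y)
          = q.map ((laAdj h).unit.app X) ≫
              q.map ((la h ⋙ ObjectProperty.ι (· ∈ T)).map f) := by
        rw [← q.map_comp, ← q.map_comp, ← h1]; rfl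
      exact h2) :
    q ≅ la h ⋙ (ObjectProperty.ι (· ∈ T) ⋙ q)).symm

/-- The inclusion of `T` composed with the localization functor is an equivalence. -/
noncomputable def laLocEquiv : ObjectProperty.FullSubcategory (· ∈ T) ≌ E₀ :=
  CategoryTheory.Equivalence.mk (ObjectProperty.ι (· ∈ T) ⋙ q)
    (Localization.lift (la h) (la_inverts h) q)
    ((asIso (laAdj h).counit).symm ≪≫
      (Functor.isoWhiskerLeft (ObjectProperty.ι (· ∈ T))
        (Localization.fac (la h) (la_inverts h) q)).symm ≪≫
      (Functor.associator _ _ _).symm)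
    (Localization.liftNatIso q (coneIn S)
      (la h ⋙ (ObjectProperty.ι (· ∈ T) ⋙ q)) q
      (Localization.lift (la h) (la_inverts h) q ⋙
        (ObjectProperty.ι (· ∈ T) ⋙ q))
      (𝟭 E₀) (laCompIso h q))

/-- The `q ⊣ j_*` adjunction. -/
noncomputable def laLocAdj :
    q ⊣ ((laLocEquiv h q).inverse ⋙ ObjectProperty.ι (· ∈ T)) :=
  Adjunction.ofNatIsoLeft ((laAdj h).comp (laLocEquiv h q).toAdjunction)
    (laCompIso h q)

end LaLoc

end Loc

lemma essImage_inverse_incl {P : Set C} (hP : IsTriangulatedSub C P)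
    {E₀ : Type*} [Category E₀] (e : ObjectProperty.FullSubcategory (· ∈ P) ≌ E₀) (X : C) :
    (∃ Y, Nonempty ((e.inverse ⋙ ObjectProperty.ι (· ∈ P)).obj Y ≅ X))
      ↔ X ∈ P := by
  constructor
  · rintro ⟨Y, ⟨iso⟩⟩
    exact hP.iso_mem iso (e.inverse.obj Y).property
  · intro hX
    exact ⟨e.functor.obj ⟨X, hX⟩,
      ⟨(ObjectProperty.ι (· ∈ P)).mapIso ((e.unitIso.app ⟨X, hX⟩).symm)⟩⟩

/-- given stable t-structures `(U, V)` and `(V, W)` in a triangulated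
category `D`, for the canonical embedding `i : V → D` and any Verdier quotient functor
`q : D → D/V` (i.e. a localization at the morphisms with cone in `V`), there is a
recollement whose `j_!` has essential image `U` and whose `j_*` has essential image `W`. -/
theorem stmt0 (U V W : Set C)
    (hUsub : IsTriangulatedSub C U) (hVsub : IsTriangulatedSub C V)
    (hWsub : IsTriangulatedSub C W)
    (hUV : IsStableTStructure C U V) (hVW : IsStableTStructure C V W)
    (E : Type u₂) [Category.{v₂} E] (q : C ⥤ E) [q.IsLocalization (coneIn V)] :
    ∃ rec : IsRecollement (ObjectProperty.ι (· ∈ V)) q,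
      (∀ X : C, (∃ Y, Nonempty (rec.jShriek.obj Y ≅ X)) ↔ X ∈ U) ∧
      (∀ X : C, (∃ Y, Nonempty (rec.jStar.obj Y ≅ X)) ↔ X ∈ W) := by
  refine ⟨{
    iStar := la hUV
    iShriek := ra hVW
    jShriek := (raLocEquiv hUV q).inverse ⋙ ObjectProperty.ι (· ∈ U)
    jStar := (laLocEquiv hVW q).inverse ⋙ ObjectProperty.ι (· ∈ W)
    adj₁ := laAdj hUV
    adj₂ := raAdj hVW
    adj₃ := raLocAdj hUV q
    adj₄ := laLocAdj hVW q
    i_full := inferInstance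
    i_faithful := inferInstance
    jShriek_full := inferInstance
    jShriek_faithful := inferInstance
    jStar_full := inferInstance
    jStar_faithful := inferInstance
    im_jShriek_eq_ker_iStar := fun X =>
      (essImage_inverse_incl hUsub (raLocEquiv hUV q) X).trans
        (isZero_la_iff hUV hUsub X).symm
    im_i_eq_ker_q := fun X => by
      constructor
      · rintro ⟨Y, ⟨iso⟩⟩
        have hX : X ∈ V := hVsub.iso_mem iso Y.property
        have hz : IsZero ((ra hUV).obj X) := (isZero_ra_iff hUV hVsub X).2 hX
        have hz2 : IsZero
            ((Localization.lift (ra hUV) (ra_inverts hUV) q).obj (q.obj X)) :=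
          IsZero.of_iso hz ((Localization.fac (ra hUV) (ra_inverts hUV) q).app X)
        exact (equiv_isZero_iff (raLocEquiv hUV q).symm (q.obj X)).2 hz2
      · intro hz
        have hz2 : IsZero
            ((Localization.lift (ra hUV) (ra_inverts hUV) q).obj (q.obj X)) :=
          (equiv_isZero_iff (raLocEquiv hUV q).symm (q.obj X)).1 hz
        have hz3 : IsZero ((ra hUV).obj X) :=
          IsZero.of_iso hz2
            ((Localization.fac (ra hUV) (ra_inverts hUV) q).app X).symm
        have hX : X ∈ V := (isZero_ra_iff hUV hVsub X).1 hz3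
        exact ⟨⟨X, hX⟩, ⟨Iso.refl X⟩⟩
    im_jStar_eq_ker_iShriek := fun X =>
      (essImage_inverse_incl hWsub (laLocEquiv hVW q) X).trans
        (isZero_ra_iff hVW hWsub X).symm },
    fun X => essImage_inverse_incl hUsub (raLocEquiv hUV q) X,
    fun X => essImage_inverse_incl hWsub (laLocEquiv hVW q) X⟩

end PaperIKM
end

section
/- Let F : D₁ → D₂ be a triangle functor sending a stable t-structure (U₁, V₁) in D₁ to a stable t-structure (U₂, V₂) in D₂ (i.e. F(U₁) ⊆ U₂ and F(V₁) ⊆ V₂). If the restriction F|_{U₁} is full (resp. faithful), then the map Hom_{D₁}(U, X) → Hom_{D₂}(FU, FX) is surjective (resp. injective) for all U ∈ U₁ and X ∈ D₁. -/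
open CategoryTheory Limits Pretriangulated

universe v₁ v₂ u₁ u₂

namespace PaperIKM

variable (C : Type u₁) [Category.{v₁} C] [HasZeroObject C] [HasShift C ℤ] [Preadditive C]
  [∀ n : ℤ, (shiftFunctor C n).Additive] [Pretriangulated C]

variable {C}
variable {D : Type u₂} [Category.{v₂} D] [HasZeroObject D] [HasShift D ℤ] [Preadditive D]
  [∀ n : ℤ, (shiftFunctor D n).Additive] [Pretriangulated D]

/-- if a triangle functor sends a stable t-structure to a stable
t-structure and its restriction to `U₁` is full (resp. faithful), then the induced maps
`Hom(U, X) → Hom(FU, FX)` are surjective (resp. injective) for `U ∈ U₁`, `X` arbitrary. -/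
theorem stmt1 (F : C ⥤ D) [F.CommShift ℤ] [F.IsTriangulated]
    (U₁ V₁ : Set C) (U₂ V₂ : Set D)
    (h₁ : IsStableTStructure C U₁ V₁) (h₂ : IsStableTStructure D U₂ V₂)
    (hU : ∀ X ∈ U₁, F.obj X ∈ U₂) (hV : ∀ X ∈ V₁, F.obj X ∈ V₂) :
    ((∀ (X Y : C), X ∈ U₁ → Y ∈ U₁ →
        Function.Surjective (fun f : X ⟶ Y => F.map f)) →
      ∀ (U X : C), U ∈ U₁ →
        Function.Surjective (fun f : U ⟶ X => F.map f)) ∧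
    ((∀ (X Y : C), X ∈ U₁ → Y ∈ U₁ →
        Function.Injective (fun f : X ⟶ Y => F.map f)) →
      ∀ (U X : C), U ∈ U₁ →
        Function.Injective (fun f : U ⟶ X => F.map f)) := by
  constructor
  · intro hfull U X hUmem g
    obtain ⟨A, B, hA, hB, a, b, c, hT⟩ := h₁.exists_triangle X
    have hT' := F.map_distinguished _ hT
    -- g ≫ F.map b = 0 since F.obj U ∈ U₂ and F.obj B ∈ V₂
    have hzero : g ≫ F.map b = 0 :=
      h₂.hom_zero (hU U hUmem) (hV B hB) _
    obtain ⟨g', hg'⟩ := Triangle.coyoneda_exact₂ _ hT' g hzero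
    obtain ⟨f', hf'⟩ := hfull U A hUmem hA g'
    refine ⟨f' ≫ a, ?_⟩
    simp only [F.map_comp]
    dsimp at hf' hg'
    rw [hf']; exact hg'.symm
  · intro hfaith U X hUmem f f' hff'
    have hadd : F.map (f - f') = 0 := by
      rw [F.map_sub]
      dsimp at hff'
      rw [hff', sub_self]
    suffices h : f - f' = 0 by
      exact sub_eq_zero.mp h
    set d := f - f' with hd
    obtain ⟨A, B, hA, hB, a, b, c, hT⟩ := h₁.exists_triangle X
    -- d ≫ b = 0
    have hdb : d ≫ b = 0 := h₁.hom_zero hUmem hB _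
    obtain ⟨e, he⟩ := Triangle.coyoneda_exact₂ _ hT d hdb
    -- e : U ⟶ A, d = e ≫ a
    have hT' := F.map_distinguished _ hT
    have hFe : F.map e ≫ F.map a = 0 := by
      have hea : e ≫ a = d := he.symm
      exact (F.map_comp e a).symm.trans ((congrArg F.map hea).trans hadd)
    -- use inverse rotation of the image triangle
    have hT'' := inv_rot_of_distTriang _ hT'
    obtain ⟨w, hw⟩ := Triangle.coyoneda_exact₂ _ hT'' (F.map e) hFe
    have hwmem : (((F.mapTriangle.obj (Triangle.mk a b c)).invRotate).obj₁ : D) ∈ V₂ := by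
      exact h₂.shift_memV (-1) _ (hV B hB)
    have : w = 0 := h₂.hom_zero (hU U hUmem) hwmem w
    rw [this, zero_comp] at hw
    have : e = 0 := hfaith U A hUmem hA (hw.trans (F.map_zero U A).symm)
    rw [he, this, zero_comp]
    rfl
end PaperIKM
end

section
/- Let F : D₁ → D₂ be a triangle functor sending a stable t-structure (U₁, V₁) in D₁ to a stable t-structure (U₂, V₂) in D₂. If F is full and the restrictions F|_{U₁} : U₁ → U₂ and F|_{V₁} : V₁ → V₂ are essentially surjective, then F is essentially surjective. -/
open CategoryTheory Limits Pretriangulated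

universe v₁ v₂ u₁ u₂

namespace PaperIKM

variable (C : Type u₁) [Category.{v₁} C] [HasZeroObject C] [HasShift C ℤ] [Preadditive C]
  [∀ n : ℤ, (shiftFunctor C n).Additive] [Pretriangulated C]

variable {C}
variable {D : Type u₂} [Category.{v₂} D] [HasZeroObject D] [HasShift D ℤ] [Preadditive D]
  [∀ n : ℤ, (shiftFunctor D n).Additive] [Pretriangulated D]

/-- if a triangle functor `F` sends a stable t-structure `(U₁, V₁)` to a stable
t-structure `(U₂, V₂)`, `F` is full, and the restrictions `U₁ → U₂`, `V₁ → V₂` are essentially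
surjective, then `F` is essentially surjective. -/
theorem stmt2 (F : C ⥤ D) [F.CommShift ℤ] [F.IsTriangulated]
    (U₁ V₁ : Set C) (U₂ V₂ : Set D)
    (h₁ : IsStableTStructure C U₁ V₁) (h₂ : IsStableTStructure D U₂ V₂)
    (hU : ∀ X ∈ U₁, F.obj X ∈ U₂) (hV : ∀ X ∈ V₁, F.obj X ∈ V₂)
    (hfull : F.Full)
    (hUdense : ∀ Y ∈ U₂, ∃ X ∈ U₁, Nonempty (F.obj X ≅ Y))
    (hVdense : ∀ Y ∈ V₂, ∃ X ∈ V₁, Nonempty (F.obj X ≅ Y)) :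
    F.EssSurj := by
  constructor
  intro Y
  obtain ⟨A, B, hA, hB, f, g, h, hT⟩ := h₂.exists_triangle Y
  obtain ⟨A', hA', ⟨eA⟩⟩ := hUdense A hA
  obtain ⟨B', hB', ⟨eB⟩⟩ := hVdense B hB
  let ψ : F.obj B' ⟶ F.obj (A'⟦(1:ℤ)⟧) :=
    eB.hom ≫ h ≫ (shiftFunctor D (1:ℤ)).map eA.inv ≫ (F.commShiftIso (1:ℤ)).inv.app A'
  let h' : B' ⟶ A'⟦(1:ℤ)⟧ := F.preimage ψ
  obtain ⟨Z, u, v, hTZ⟩ := Pretriangulated.distinguished_cocone_triangle h'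
  have hFZ : F.mapTriangle.obj (Triangle.mk h' u v) ∈ distTriang D := F.map_distinguished _ hTZ
  have hrot : (Triangle.mk f g h).rotate.rotate ∈ distTriang D :=
    rot_of_distTriang _ (rot_of_distTriang _ hT)
  let e₂ : F.obj (A'⟦(1:ℤ)⟧) ≅ A⟦(1:ℤ)⟧ :=
    (F.commShiftIso (1:ℤ)).app A' ≪≫ (shiftFunctor D (1:ℤ)).mapIso eA
  have comm : (F.mapTriangle.obj (Triangle.mk h' u v)).mor₁ ≫ e₂.hom =
      eB.hom ≫ ((Triangle.mk f g h).rotate.rotate).mor₁ := by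
    dsimp [e₂]
    change F.map h' ≫ _ = _
    rw [F.map_preimage]
    simp [ψ]
    rfl
  let e := Pretriangulated.isoTriangleOfIso₁₂ _ _ hFZ hrot eB e₂ comm
  have iso3 : F.obj Z ≅ Y⟦(1:ℤ)⟧ := Triangle.π₃.mapIso e
  refine ⟨Z⟦(-1:ℤ)⟧, ⟨?_⟩⟩
  exact (F.commShiftIso (-1:ℤ)).app Z ≪≫ (shiftFunctor D (-1:ℤ)).mapIso iso3 ≪≫
    (shiftFunctorCompIsoId D (1:ℤ) (-1:ℤ) (by omega)).app Y

end PaperIKM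
end

section
/- Let C and C' be Frobenius categories and F : C → C', G : C' → C exact functors such that F is right adjoint to G. Then F sends projective-injective objects to projective-injective objects, G sends projective-injective objects to projective-injective objects, and the induced triangle functors F̱ : C̱ → C̱' and G̱ : C̱' → C̱ on stable categories satisfy that F̱ is right adjoint to G̱. -/
open CategoryTheory Limits

universe v₁ v₂ u₁ u₂

namespace PaperIKM

/-- The data of an exact structure (a class of conflations) on an additive category,
together with choices of "injective hulls" defining the suspension, as in a Frobenius
category. -/
structure FrobeniusData (C : Type u₁) [Category.{v₁} C] [Preadditive C] where
  /-- `conf f g` : `0 → X --f--> Y --g--> Z → 0` is a conflation. -/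
  conf : ∀ ⦃X Y Z : C⦄, (X ⟶ Y) → (Y ⟶ Z) → Prop
  /-- chosen projective-injective object receiving `X` -/
  I : C → C
  /-- the suspension of `X`, cokernel of `X ⟶ I X` -/
  susp : C → C
  unitI : ∀ X : C, X ⟶ I X
  counitI : ∀ X : C, I X ⟶ susp X

namespace FrobeniusData

variable {C : Type u₁} [Category.{v₁} C] [Preadditive C] (E : FrobeniusData C)

/-- Projectivity with respect to the conflations of `E`. -/
def Proj (P : C) : Prop :=
  ∀ ⦃X Y Z : C⦄ (f : X ⟶ Y) (g : Y ⟶ Z), E.conf f g → ∀ h : P ⟶ Z, ∃ l : P ⟶ Y, l ≫ g = h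

/-- Injectivity with respect to the conflations of `E`. -/
def Inj (I' : C) : Prop :=
  ∀ ⦃X Y Z : C⦄ (f : X ⟶ Y) (g : Y ⟶ Z), E.conf f g → ∀ h : X ⟶ I', ∃ l : Y ⟶ I', f ≫ l = h

/-- The axioms making `E` a Frobenius category. -/
structure IsFrobenius : Prop where
  comp_zero : ∀ ⦃X Y Z : C⦄ (f : X ⟶ Y) (g : Y ⟶ Z), E.conf f g → f ≫ g = 0
  conf_ker : ∀ ⦃X Y Z : C⦄ (f : X ⟶ Y) (g : Y ⟶ Z), E.conf f g →
    ∀ (T : C) (u : T ⟶ Y), u ≫ g = 0 → ∃! v : T ⟶ X, v ≫ f = u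
  conf_coker : ∀ ⦃X Y Z : C⦄ (f : X ⟶ Y) (g : Y ⟶ Z), E.conf f g →
    ∀ (T : C) (u : Y ⟶ T), f ≫ u = 0 → ∃! v : Z ⟶ T, g ≫ v = u
  enough_proj : ∀ X : C, ∃ (P K : C) (k : K ⟶ P) (p : P ⟶ X), E.Proj P ∧ E.conf k p
  enough_inj : ∀ X : C, ∃ (J K : C) (i : X ⟶ J) (c : J ⟶ K), E.Inj J ∧ E.conf i c
  proj_iff_inj : ∀ P : C, E.Proj P ↔ E.Inj P
  conf_unit : ∀ X : C, E.conf (E.unitI X) (E.counitI X)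
  I_proj : ∀ X : C, E.Proj (E.I X)

/-- Two morphisms are stably equal if their difference factors through a projective. -/
def stableRel : HomRel C := fun {X Y} f g =>
  ∃ (P : C) (_ : E.Proj P) (a : X ⟶ P) (b : P ⟶ Y), f - g = a ≫ b

/-- The stable category of the Frobenius category. -/
def Stable := CategoryTheory.Quotient E.stableRel

instance : Category E.Stable := CategoryTheory.Quotient.category E.stableRel

/-- The quotient functor to the stable category. -/
def toStable : C ⥤ E.Stable := CategoryTheory.Quotient.functor E.stableRel

end FrobeniusData

variable {C : Type u₁} [Category.{v₁} C] [Preadditive C]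
variable {D : Type u₂} [Category.{v₂} D] [Preadditive D]


section Aux

variable {C : Type u₁} [Category.{v₁} C] [Preadditive C]

lemma FrobeniusData.compClosure_stableRel (E : FrobeniusData C) {X Y : C} {f g : X ⟶ Y}
    (h : HomRel.CompClosure E.stableRel f g) : E.stableRel f g := by
  obtain ⟨_, _, u, m₁, m₂, v, P, hP, a, b, hab⟩ := h
  refine ⟨P, hP, u ≫ a, b ≫ v, ?_⟩
  rw [← Preadditive.comp_sub, ← Preadditive.sub_comp, hab]
  simp

end Aux

/-- if `F : C ⥤ D` and `G : D ⥤ C` are exact functors between Frobenius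
categories with `F` right adjoint to `G`, then both preserve projective-injective objects
and the induced functors on stable categories are again adjoint (`Ḡ ⊣ F̄`). -/
theorem stmt19 (E : FrobeniusData C) (E' : FrobeniusData D)
    (hE : E.IsFrobenius) (hE' : E'.IsFrobenius)
    (F : C ⥤ D) (G : D ⥤ C) [F.Additive] [G.Additive]
    (hFexact : ∀ ⦃X Y Z : C⦄ (f : X ⟶ Y) (g : Y ⟶ Z), E.conf f g →
      E'.conf (F.map f) (F.map g))
    (hGexact : ∀ ⦃X Y Z : D⦄ (f : X ⟶ Y) (g : Y ⟶ Z), E'.conf f g →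
      E.conf (G.map f) (G.map g))
    (adj : G ⊣ F) :
    (∀ P : C, E.Proj P ∧ E.Inj P → E'.Proj (F.obj P) ∧ E'.Inj (F.obj P)) ∧
    (∀ P : D, E'.Proj P ∧ E'.Inj P → E.Proj (G.obj P) ∧ E.Inj (G.obj P)) ∧
    ∃ (Fbar : E.Stable ⥤ E'.Stable) (Gbar : E'.Stable ⥤ E.Stable),
      (E.toStable ⋙ Fbar = F ⋙ E'.toStable) ∧
      (E'.toStable ⋙ Gbar = G ⋙ E.toStable) ∧
      Nonempty (Gbar ⊣ Fbar) := by
  classical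
  -- F preserves injectives (right adjoint to the exact functor G)
  have hFinjP : ∀ P : C, E.Inj P → E'.Inj (F.obj P) := by
    intro P hP X Y Z f g hc h
    obtain ⟨l, hl⟩ := hP (G.map f) (G.map g) (hGexact f g hc) ((adj.homEquiv X P).symm h)
    refine ⟨adj.homEquiv Y P l, ?_⟩
    rw [← adj.homEquiv_naturality_left, hl, Equiv.apply_symm_apply]
  -- G preserves projectives (left adjoint to the exact functor F)
  have hGprojP : ∀ P : D, E'.Proj P → E.Proj (G.obj P) := by
    intro P hP X Y Z f g hc h
    obtain ⟨l, hl⟩ := hP (F.map f) (F.map g) (hFexact f g hc) (adj.homEquiv P Z h)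
    refine ⟨(adj.homEquiv P Y).symm l, ?_⟩
    rw [← adj.homEquiv_naturality_right_symm, hl, Equiv.symm_apply_apply]
  have hFrel : ∀ {X Y : C} (f g : X ⟶ Y), E.stableRel f g →
      E'.stableRel (F.map f) (F.map g) := by
    rintro X Y f g ⟨P, hP, a, b, hab⟩
    exact ⟨F.obj P, (hE'.proj_iff_inj _).mpr (hFinjP P ((hE.proj_iff_inj P).mp hP)),
      F.map a, F.map b, by rw [← F.map_sub, hab, F.map_comp]⟩
  have hGrel : ∀ {X Y : D} (f g : X ⟶ Y), E'.stableRel f g →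
      E.stableRel (G.map f) (G.map g) := by
    rintro X Y f g ⟨P, hP, a, b, hab⟩
    exact ⟨G.obj P, hGprojP P hP, G.map a, G.map b, by rw [← G.map_sub, hab, G.map_comp]⟩
  -- stable relation transfers along the adjunction hom-equivalence
  have hAdjRel : ∀ (X : D) (Y : C) (f g : G.obj X ⟶ Y), E.stableRel f g →
      E'.stableRel (adj.homEquiv X Y f) (adj.homEquiv X Y g) := by
    rintro X Y f g ⟨P, hP, a, b, hab⟩
    refine ⟨F.obj P, (hE'.proj_iff_inj _).mpr (hFinjP P ((hE.proj_iff_inj P).mp hP)),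
      adj.homEquiv X P a, F.map b, ?_⟩
    rw [adj.homEquiv_unit, adj.homEquiv_unit, adj.homEquiv_unit, ← Preadditive.comp_sub,
      ← F.map_sub, hab, F.map_comp]
    simp
  have hAdjRel' : ∀ (X : D) (Y : C) (f g : X ⟶ F.obj Y), E'.stableRel f g →
      E.stableRel ((adj.homEquiv X Y).symm f) ((adj.homEquiv X Y).symm g) := by
    rintro X Y f g ⟨P, hP, a, b, hab⟩
    refine ⟨G.obj P, hGprojP P hP, G.map a, G.map b ≫ adj.counit.app Y, ?_⟩
    rw [adj.homEquiv_counit, adj.homEquiv_counit, ← Preadditive.sub_comp,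
      ← G.map_sub, hab, G.map_comp]
    simp
  refine ⟨?_, ?_, ?_⟩
  · rintro P ⟨hp, hi⟩
    have hi' := hFinjP P hi
    exact ⟨(hE'.proj_iff_inj _).mpr hi', hi'⟩
  · rintro P ⟨hp, hi⟩
    have hp' := hGprojP P hp
    exact ⟨hp', (hE.proj_iff_inj _).mp hp'⟩
  · refine ⟨CategoryTheory.Quotient.lift E.stableRel (F ⋙ E'.toStable)
        (fun x y f g h => CategoryTheory.Quotient.sound E'.stableRel (hFrel f g h)),
      CategoryTheory.Quotient.lift E'.stableRel (G ⋙ E.toStable)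
        (fun x y f g h => CategoryTheory.Quotient.sound E.stableRel (hGrel f g h)),
      CategoryTheory.Quotient.lift_spec _ _ _, CategoryTheory.Quotient.lift_spec _ _ _, ⟨?_⟩⟩
    refine Adjunction.mkOfHomEquiv
      { homEquiv := fun X Y =>
          { toFun := Quot.lift (fun f => Quot.mk _ (adj.homEquiv X.as Y.as f))
              (fun f g h => Quot.sound (HomRel.CompClosure.of
                (hAdjRel X.as Y.as f g (E.compClosure_stableRel h))))
            invFun := Quot.lift (fun f => Quot.mk _ ((adj.homEquiv X.as Y.as).symm f))
              (fun f g h => Quot.sound (HomRel.CompClosure.of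
                (hAdjRel' X.as Y.as f g (E'.compClosure_stableRel h))))
            left_inv := fun f => Quot.inductionOn f (fun f₀ =>
              congrArg (Quot.mk _) ((adj.homEquiv X.as Y.as).symm_apply_apply f₀))
            right_inv := fun f => Quot.inductionOn f (fun f₀ =>
              congrArg (Quot.mk _) ((adj.homEquiv X.as Y.as).apply_symm_apply f₀)) }
        homEquiv_naturality_left_symm := by
          intro X' X Y f g
          refine Quot.inductionOn f (fun f₀ => Quot.inductionOn g (fun g₀ => ?_))
          exact congrArg (Quot.mk _) (adj.homEquiv_naturality_left_symm f₀ g₀)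
        homEquiv_naturality_right := by
          intro X Y Y' f g
          refine Quot.inductionOn f (fun f₀ => Quot.inductionOn g (fun g₀ => ?_))
          exact congrArg (Quot.mk _) (adj.homEquiv_naturality_right f₀ g₀) }


end PaperIKM
end
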